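/- Let α, β, γ, ε be real numbers satisfying the Fuchsian condition 1 + α + β = γ + 2ε, and suppose γ > −1. Define w(z) = Σ_{k=0}^∞ [ (α/2)_k (β/2)_k / ( ((1+γ)/2)_k k! ) ] z^(2k), where (x)_k is the ascending Pochhammer symbol (the series converges for |z| < 1). Then for every z ∈ (0,1), w satisfies the general Heun equation with a = −1, q = 0, δ = ε: w''(z) + ( γ/z + ε/(z−1) + ε/(z+1) ) w'(z) + αβ z/( z(z−1)(z+1) ) w(z) = 0. -/

import Mathlib

open Filter Topology

lemma tend_ratio (p q : ℝ) :
    Tendsto (fun k : ℕ => (p + k) / (q + k)) atTop (𝓝 1) := by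
  have h1 : Tendsto (fun k : ℕ => q + (k : ℝ)) atTop atTop :=
    tendsto_atTop_add_const_left _ _ tendsto_natCast_atTop_atTop
  have h2 : Tendsto (fun k : ℕ => 1 + (p - q) / (q + k)) atTop (𝓝 1) := by
    simpa using tendsto_const_nhds.add (tendsto_const_nhds.div_atTop h1)
  refine h2.congr' ?_
  filter_upwards [h1.eventually_gt_atTop 0] with k hk
  field_simp
  ring

lemma tend_ratio_abs (p q : ℝ) :
    Tendsto (fun k : ℕ => |p + k| / (q + k)) atTop (𝓝 1) := by
  refine (tend_ratio p q).congr' ?_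
  have h1 : Tendsto (fun k : ℕ => p + (k : ℝ)) atTop atTop :=
    tendsto_atTop_add_const_left _ _ tendsto_natCast_atTop_atTop
  filter_upwards [h1.eventually_ge_atTop 0] with k hk
  rw [abs_of_nonneg hk]

lemma master_summable (a b cc : ℝ) (hcc : 0 < cc) (c : ℕ → ℝ)
    (hrec : ∀ k : ℕ, c (k+1) * ((cc + k) * ((k : ℝ) + 1)) = c k * ((a + k) * (b + k)))
    (r : ℝ) (hr0 : 0 ≤ r) (hr1 : r < 1) :
    Summable (fun k : ℕ => ((k : ℝ) + 3)^2 * |c k| * r^k) := by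
  rcases eq_or_lt_of_le hr0 with h0 | hr0
  · apply summable_of_ne_finset_zero (s := {0})
    intro k hk
    have hk1 : k ≠ 0 := by simpa using hk
    rw [← h0, zero_pow hk1, mul_zero]
  · set r' := (1 + r) / 2 with hr'def
    have hrr' : r < r' := by rw [hr'def]; linarith
    have hr'1 : r' < 1 := by rw [hr'def]; linarith
    -- the exact multiplicative ratio between consecutive terms
    have habs : ∀ k : ℕ, |c (k+1)| * ((cc + k) * ((k:ℝ) + 1)) = |c k| * (|a + k| * |b + k|) := by
      intro k
      have h1 : (0:ℝ) < (cc + k) * ((k:ℝ) + 1) := by positivity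
      have h2 := congrArg abs (hrec k)
      rw [abs_mul, abs_of_pos h1, abs_mul, abs_mul] at h2
      exact h2
    have hq : Tendsto (fun k : ℕ =>
        (((k:ℝ) + 4)^2 * (|a + k| * |b + k|) * r) / (((k:ℝ) + 3)^2 * ((cc + k) * ((k:ℝ) + 1))))
        atTop (𝓝 r) := by
      have t1 : Tendsto (fun k : ℕ => ((k:ℝ) + 4) / ((k:ℝ) + 3)) atTop (𝓝 1) := by
        simpa [add_comm] using tend_ratio 4 3
      have t2 : Tendsto (fun k : ℕ => |a + k| / (cc + k)) atTop (𝓝 1) := tend_ratio_abs a cc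
      have t3 : Tendsto (fun k : ℕ => |b + k| / ((k:ℝ) + 1)) atTop (𝓝 1) := by
        simpa [add_comm] using tend_ratio_abs b 1
      have := (((t1.mul t1).mul t2).mul t3).mul (tendsto_const_nhds (x := r))
      simp only [one_mul] at this
      refine this.congr (fun k => ?_)
      have hk3 : ((k:ℝ) + 3) ≠ 0 := by positivity
      have hk1 : ((k:ℝ) + 1) ≠ 0 := by positivity
      have hkc : (cc + (k:ℝ)) ≠ 0 := by positivity
      field_simp
    have hev : ∀ᶠ k : ℕ in atTop,
        (((k:ℝ) + 4)^2 * (|a + k| * |b + k|) * r) / (((k:ℝ) + 3)^2 * ((cc + k) * ((k:ℝ) + 1))) ≤ r' :=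
      (hq.eventually_lt_const hrr').mono (fun k hk => le_of_lt hk)
    apply summable_of_ratio_norm_eventually_le hr'1
    filter_upwards [hev] with k hk
    have hv1 : (0:ℝ) ≤ ((k:ℝ) + 3)^2 * |c k| * r^k := by positivity
    have hv2 : (0:ℝ) ≤ (((k:ℝ)+1) + 3)^2 * |c (k+1)| * r^(k+1) := by positivity
    rw [Real.norm_eq_abs, Real.norm_eq_abs, abs_of_nonneg hv1]
    push_cast
    rw [abs_of_nonneg (by positivity)]
    -- show the exact ratio identity then conclude
    have hd : (0:ℝ) < (cc + k) * ((k:ℝ) + 1) := by positivity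
    have hc1 : |c (k+1)| = |c k| * (|a + k| * |b + k|) / ((cc + k) * ((k:ℝ) + 1)) := by
      field_simp
      linarith [habs k]
    have heq : ((k:ℝ) + 1 + 3)^2 * |c (k+1)| * r^(k+1)
        = ((((k:ℝ) + 4)^2 * (|a + k| * |b + k|) * r) / (((k:ℝ) + 3)^2 * ((cc + k) * ((k:ℝ) + 1))))
          * (((k:ℝ) + 3)^2 * |c k| * r^k) := by
      rw [hc1, pow_succ]
      have hk3 : (((k:ℝ) + 3)^2) ≠ 0 := by positivity
      field_simp
      ring
    rw [heq]
    exact mul_le_mul_of_nonneg_right hk hv1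

lemma summable_weight {c : ℕ → ℝ} {ρ : ℝ} (hρ : 0 ≤ ρ)
    (hM : Summable fun k : ℕ => ((k:ℝ) + 3)^2 * |c k| * ρ^k)
    (wt : ℕ → ℝ) (C : ℝ) (hwt : ∀ k, |wt k| ≤ C * ((k:ℝ) + 3)^2) :
    Summable fun k : ℕ => wt k * (c k * ρ^k) := by
  refine Summable.of_norm_bounded (g := fun k => C * (((k:ℝ)+3)^2 * |c k| * ρ^k)) (hM.mul_left C) ?_
  intro k
  rw [Real.norm_eq_abs, abs_mul, abs_mul, abs_pow, abs_of_nonneg hρ]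
  calc |wt k| * (|c k| * ρ^k) ≤ (C * ((k:ℝ)+3)^2) * (|c k| * ρ^k) :=
        mul_le_mul_of_nonneg_right (hwt k) (by positivity)
    _ = C * (((k:ℝ)+3)^2 * |c k| * ρ^k) := by ring

lemma term_hasDerivAt (c : ℕ → ℝ) (n : ℕ) (y : ℝ) :
    HasDerivAt (fun x : ℝ => c n * x ^ (2*n)) (c n * (↑(2*n) * y ^ (2*n - 1))) y :=
  (hasDerivAt_pow (2*n) y).const_mul (c n)

lemma gterm_hasDerivAt (c : ℕ → ℝ) (n : ℕ) (y : ℝ) :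
    HasDerivAt (fun x : ℝ => c n * (↑(2*n) * x ^ (2*n - 1)))
      ((c n * ↑(2*n)) * (↑(2*n - 1) * y ^ (2*n - 1 - 1))) y := by
  have := (hasDerivAt_pow (2*n - 1) y).const_mul (c n * ↑(2*n))
  refine this.congr_of_eventuallyEq (Filter.Eventually.of_forall fun x => ?_)
  ring

lemma g_bound (c : ℕ → ℝ) (R : ℝ) (hR0 : 0 < R) (hR1 : R < 1) (n : ℕ) (y : ℝ)
    (hy : |y| ≤ R) :
    ‖c n * (↑(2*n) * y ^ (2*n - 1))‖ ≤ (4 / R^2) * (((n:ℝ) + 3)^2 * |c n| * (R^2)^n) := by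
  rw [Real.norm_eq_abs, abs_mul, abs_mul, abs_pow, Nat.abs_cast]
  have hyp : |y| ^ (2*n - 1) ≤ R ^ (2*n - 1) := pow_le_pow_left₀ (abs_nonneg y) hy _
  have key : ((2*n : ℕ) : ℝ) * R ^ (2*n - 1) ≤ (4 / R^2) * (((n:ℝ) + 3)^2 * (R^2)^n) := by
    rcases n with _ | m
    · simp; positivity
    · have he : 2*(m+1) - 1 = 2*m + 1 := by omega
      rw [he]
      have hp : (R^2)^(m+1) = R^(2*m+1) * R := by ring
      rw [hp]
      have h1 : R^(2*m+1) ≤ R^(2*m+1) := le_refl _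
      have hRpos : (0:ℝ) < R^(2*m+1) := by positivity
      push_cast
      rw [div_mul_eq_mul_div, le_div_iff₀ (by positivity)]
      have hR2 : R^2 ≤ R := by nlinarith
      have hcoef : 2*((m:ℝ)+1)*R^2 ≤ 4*(((m:ℝ)+1+3))^2*R := by nlinarith [sq_nonneg ((m:ℝ))]
      nlinarith [mul_le_mul_of_nonneg_left hcoef (le_of_lt hRpos)]
  calc |c n| * (((2*n:ℕ):ℝ) * |y| ^ (2*n-1))
      ≤ |c n| * (((2*n:ℕ):ℝ) * R ^ (2*n-1)) := by
        apply mul_le_mul_of_nonneg_left _ (abs_nonneg _)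
        exact mul_le_mul_of_nonneg_left hyp (by positivity)
    _ ≤ |c n| * ((4 / R^2) * (((n:ℝ) + 3)^2 * (R^2)^n)) :=
        mul_le_mul_of_nonneg_left key (abs_nonneg _)
    _ = (4 / R^2) * (((n:ℝ) + 3)^2 * |c n| * (R^2)^n) := by ring

lemma h_bound (c : ℕ → ℝ) (R : ℝ) (hR0 : 0 < R) (hR1 : R < 1) (n : ℕ) (y : ℝ)
    (hy : |y| ≤ R) :
    ‖(c n * ↑(2*n)) * (↑(2*n - 1) * y ^ (2*n - 1 - 1))‖
      ≤ (4 / R^2) * (((n:ℝ) + 3)^2 * |c n| * (R^2)^n) := by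
  rw [Real.norm_eq_abs, abs_mul, abs_mul, abs_mul, abs_pow, Nat.abs_cast, Nat.abs_cast]
  have hyp : |y| ^ (2*n - 1 - 1) ≤ R ^ (2*n - 1 - 1) := pow_le_pow_left₀ (abs_nonneg y) hy _
  have key : ((2*n : ℕ) : ℝ) * (((2*n - 1 : ℕ) : ℝ) * R ^ (2*n - 1 - 1))
      ≤ (4 / R^2) * (((n:ℝ) + 3)^2 * (R^2)^n) := by
    rcases n with _ | m
    · simp; positivity
    · have he : 2*(m+1) - 1 = 2*m + 1 := by omega
      have he2 : 2*(m+1) - 1 - 1 = 2*m := by omega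
      rw [he2, he]
      have hp : (R^2)^(m+1) = R^(2*m) * R^2 := by ring
      rw [hp]
      have hRpos : (0:ℝ) < R^(2*m) := by positivity
      push_cast
      rw [div_mul_eq_mul_div, le_div_iff₀ (by positivity)]
      have hcoef : (2*((m:ℝ)+1))*(2*(m:ℝ)+1) ≤ 4*(((m:ℝ)+1+3))^2 := by nlinarith [sq_nonneg ((m:ℝ))]
      nlinarith [mul_le_mul_of_nonneg_left hcoef (le_of_lt (mul_pos hRpos (mul_pos hR0 hR0)))]
  calc |c n| * ((2*n:ℕ):ℝ) * (((2*n-1:ℕ):ℝ) * |y| ^ (2*n-1-1))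
      ≤ |c n| * ((2*n:ℕ):ℝ) * (((2*n-1:ℕ):ℝ) * R ^ (2*n-1-1)) := by
        apply mul_le_mul_of_nonneg_left _ (by positivity)
        exact mul_le_mul_of_nonneg_left hyp (by positivity)
    _ = |c n| * (((2*n:ℕ):ℝ) * (((2*n-1:ℕ):ℝ) * R ^ (2*n-1-1))) := by ring
    _ ≤ |c n| * ((4 / R^2) * (((n:ℝ) + 3)^2 * (R^2)^n)) :=
        mul_le_mul_of_nonneg_left key (abs_nonneg _)
    _ = (4 / R^2) * (((n:ℝ) + 3)^2 * |c n| * (R^2)^n) := by ring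

lemma g_val (c : ℕ → ℝ) (n : ℕ) {z : ℝ} (hz : z ≠ 0) :
    c n * (↑(2*n) * z ^ (2*n - 1)) = (2*(n:ℝ)) * (c n * z ^ (2*n)) / z := by
  rcases n with _ | m
  · simp
  · have he : 2*(m+1) - 1 = 2*m + 1 := by omega
    have he2 : 2*(m+1) = (2*m+1) + 1 := by omega
    rw [he, he2, pow_succ]
    push_cast
    field_simp
    ring

lemma h_val (c : ℕ → ℝ) (n : ℕ) {z : ℝ} (hz : z ≠ 0) :
    (c n * ↑(2*n)) * (↑(2*n - 1) * z ^ (2*n - 1 - 1))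
      = (2*(n:ℝ)) * ((2*(n:ℝ)) - 1) * (c n * z ^ (2*n)) / z^2 := by
  rcases n with _ | m
  · simp
  · have he : 2*(m+1) - 1 = 2*m + 1 := by omega
    have he2 : 2*(m+1) - 1 - 1 = 2*m := by omega
    have he3 : 2*(m+1) = 2*m + 2 := by omega
    rw [he2, he, he3, pow_add]
    push_cast
    field_simp
    ring

lemma g_zero (c : ℕ → ℝ) (n : ℕ) :
    c n * (↑(2*n) * (0:ℝ) ^ (2*n - 1)) = 0 := by
  rcases n with _ | m
  · simp
  · have he : 2*(m+1) - 1 = 2*m + 1 := by omega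
    rw [he, zero_pow (by omega)]
    ring

lemma heun_rec (α β γ : ℝ) (hγ : -1 < γ) (k : ℕ) :
    (((ascPochhammer ℝ (k+1)).eval (α/2) * (ascPochhammer ℝ (k+1)).eval (β/2))
        / ((ascPochhammer ℝ (k+1)).eval ((1+γ)/2) * ((k+1).factorial : ℝ)))
      * (((1+γ)/2 + k) * ((k:ℝ) + 1))
    = (((ascPochhammer ℝ k).eval (α/2) * (ascPochhammer ℝ k).eval (β/2))
        / ((ascPochhammer ℝ k).eval ((1+γ)/2) * (k.factorial : ℝ)))
      * ((α/2 + k) * (β/2 + k)) := by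
  have hpos : 0 < (ascPochhammer ℝ k).eval ((1+γ)/2) :=
    ascPochhammer_pos k _ (by linarith)
  have hpos2 : 0 < ((1+γ)/2 + (k:ℝ)) := by
    have : (0:ℝ) ≤ (k:ℝ) := Nat.cast_nonneg k
    linarith
  have hfac : (0:ℝ) < (k.factorial : ℝ) := by exact_mod_cast k.factorial_pos
  rw [ascPochhammer_succ_eval, ascPochhammer_succ_eval, ascPochhammer_succ_eval,
    Nat.factorial_succ]
  push_cast
  rw [div_mul_eq_mul_div, div_mul_eq_mul_div, div_eq_div_iff (by positivity) (by positivity)]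
  ring

noncomputable def hcoef (α β γ : ℝ) (k : ℕ) : ℝ :=
  ((ascPochhammer ℝ k).eval (α/2) * (ascPochhammer ℝ k).eval (β/2))
    / ((ascPochhammer ℝ k).eval ((1+γ)/2) * (k.factorial : ℝ))

/-- Let `α, β, γ, ε` be real satisfying the Fuchsian condition `1 + α + β = γ + 2ε`, with
`γ > −1`.  Define `w(z) = Σ_k (α/2)_k (β/2)_k / (((1+γ)/2)_k k!) z^(2k)` (the Gauss
hypergeometric function `₂F₁(α/2, β/2; (1+γ)/2; z²)`).  Then for every `z ∈ (0,1)`, `w`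
satisfies the general Heun equation with `a = −1`, `q = 0`, `δ = ε`:
`w'' + (γ/z + ε/(z−1) + ε/(z+1)) w' + αβ z/(z(z−1)(z+1)) w = 0`. -/
theorem heun_q_zero_even_solution (α β γ ε : ℝ) (hfuchs : 1 + α + β = γ + 2 * ε)
    (hγ : -1 < γ)
    (w : ℝ → ℝ)
    (hw : ∀ z : ℝ, w z = ∑' k : ℕ,
        ((ascPochhammer ℝ k).eval (α / 2) * (ascPochhammer ℝ k).eval (β / 2))
          / ((ascPochhammer ℝ k).eval ((1 + γ) / 2) * (k.factorial : ℝ)) * z ^ (2 * k)) :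
    ∀ z ∈ Set.Ioo (0:ℝ) 1,
      DifferentiableAt ℝ w z ∧ DifferentiableAt ℝ (deriv w) z ∧
      deriv (deriv w) z + (γ / z + ε / (z - 1) + ε / (z + 1)) * deriv w z
        + α * β * z / (z * (z - 1) * (z + 1)) * w z = 0 := by
  intro z hz
  obtain ⟨hz0, hz1⟩ := hz
  have hzne : z ≠ 0 := ne_of_gt hz0
  have hzm1 : z - 1 ≠ 0 := sub_ne_zero.mpr (ne_of_lt hz1)
  have hzp1 : z + 1 ≠ 0 := by positivity
  set c : ℕ → ℝ := hcoef α β γ with hcdef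
  have hC : ∀ y : ℝ, w y = ∑' k : ℕ, c k * y ^ (2*k) := by rw [hcdef]; exact hw
  have hrec : ∀ k : ℕ, c (k+1) * (((1+γ)/2 + k) * ((k:ℝ)+1))
      = c k * ((α/2 + k) * (β/2 + k)) := by
    rw [hcdef]; exact fun k => heun_rec α β γ hγ k
  have hcc : (0:ℝ) < (1+γ)/2 := by linarith
  set R : ℝ := (1 + z)/2 with hRdef
  have hR0 : 0 < R := by rw [hRdef]; linarith
  have hR1 : R < 1 := by rw [hRdef]; linarith
  have hzR : z < R := by rw [hRdef]; linarith
  have hU : Summable (fun n : ℕ => (4 / R^2) * (((n:ℝ)+3)^2 * |c n| * (R^2)^n)) := by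
    refine Summable.mul_left _ ?_
    exact master_summable (α/2) (β/2) ((1+γ)/2) hcc c hrec (R^2) (by positivity) (by nlinarith)
  have hsum0 : Summable (fun n : ℕ => c n * (0:ℝ) ^ (2*n)) := by
    apply summable_of_ne_finset_zero (s := {0})
    intro k hk
    have hk0 : k ≠ 0 := by simpa using hk
    rw [zero_pow (by omega), mul_zero]
  have hgsum0 : Summable (fun n : ℕ => c n * (↑(2*n) * (0:ℝ) ^ (2*n - 1))) :=
    Summable.congr summable_zero (fun n => (g_zero c n).symm)
  have hzero_mem : (0:ℝ) ∈ Set.Ioo (-R) R := ⟨by linarith, hR0⟩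
  have hzmem : z ∈ Set.Ioo (-R) R := ⟨by linarith, hzR⟩
  have hd1 : ∀ y ∈ Set.Ioo (-R) R,
      HasDerivAt w (∑' n : ℕ, c n * (↑(2*n) * y ^ (2*n - 1))) y := by
    intro y hy
    have hfun : w = fun x => ∑' k : ℕ, c k * x ^ (2*k) := funext hC
    rw [hfun]
    exact hasDerivAt_tsum_of_isPreconnected hU isOpen_Ioo isPreconnected_Ioo
      (fun n x hx => term_hasDerivAt c n x)
      (fun n x hx => g_bound c R hR0 hR1 n x (le_of_lt (abs_lt.mpr ⟨hx.1, hx.2⟩)))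
      hzero_mem hsum0 hy
  have hd2 : ∀ y ∈ Set.Ioo (-R) R,
      HasDerivAt (fun x => ∑' n : ℕ, c n * (↑(2*n) * x ^ (2*n - 1)))
        (∑' n : ℕ, (c n * ↑(2*n)) * (↑(2*n - 1) * y ^ (2*n - 1 - 1))) y := by
    intro y hy
    exact hasDerivAt_tsum_of_isPreconnected hU isOpen_Ioo isPreconnected_Ioo
      (fun n x hx => gterm_hasDerivAt c n x)
      (fun n x hx => h_bound c R hR0 hR1 n x (le_of_lt (abs_lt.mpr ⟨hx.1, hx.2⟩)))
      hzero_mem hgsum0 hy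
  have hder1 := hd1 z hzmem
  have hEV : deriv w =ᶠ[nhds z] (fun y => ∑' n : ℕ, c n * (↑(2*n) * y ^ (2*n - 1))) := by
    filter_upwards [isOpen_Ioo.mem_nhds hzmem] with y hy using (hd1 y hy).deriv
  have hder2 : HasDerivAt (deriv w)
      (∑' n : ℕ, (c n * ↑(2*n)) * (↑(2*n - 1) * z ^ (2*n - 1 - 1))) z :=
    (hd2 z hzmem).congr_of_eventuallyEq hEV
  refine ⟨hder1.differentiableAt, hder2.differentiableAt, ?_⟩
  -- summabilities at z
  have hM : Summable (fun k : ℕ => ((k:ℝ)+3)^2 * |c k| * (z^2)^k) :=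
    master_summable (α/2) (β/2) ((1+γ)/2) hcc c hrec (z^2) (by positivity) (by nlinarith)
  have hWsum : ∀ (wt : ℕ → ℝ) (C : ℝ), (∀ k, |wt k| ≤ C * ((k:ℝ)+3)^2) →
      Summable (fun k : ℕ => wt k * (c k * z ^ (2*k))) := by
    intro wt C hwt
    refine (summable_weight (by positivity) hM wt C hwt).congr (fun k => ?_)
    rw [← pow_mul]
  have hk3 : ∀ k : ℕ, (1:ℝ) ≤ ((k:ℝ)+3)^2 := by
    intro k; nlinarith [Nat.cast_nonneg (α := ℝ) k]
  have sT : Summable (fun k : ℕ => c k * z ^ (2*k)) := by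
    have := hWsum (fun _ => 1) 1 (fun k => by rw [abs_one, one_mul]; exact hk3 k)
    simpa using this
  have sT1 : Summable (fun k : ℕ => (2*(k:ℝ)) * (c k * z ^ (2*k))) :=
    hWsum _ 2 (fun k => by
      rw [abs_of_nonneg (by positivity)]
      nlinarith [Nat.cast_nonneg (α := ℝ) k])
  have sT2 : Summable (fun k : ℕ => ((2*(k:ℝ)) * ((2*(k:ℝ)) - 1)) * (c k * z ^ (2*k))) :=
    hWsum _ 4 (fun k => by
      have h0 : (0:ℝ) ≤ (k:ℝ) := Nat.cast_nonneg k
      rw [abs_mul, abs_of_nonneg (by positivity)]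
      have habs1 : |2*(k:ℝ) - 1| ≤ 2*(k:ℝ)+1 := by rw [abs_le]; constructor <;> linarith
      nlinarith)
  have sTg : Summable (fun k : ℕ => ((2*(k:ℝ)) * ((2*(k:ℝ)) - 1 + γ)) * (c k * z ^ (2*k))) := by
    refine (sT2.add (sT1.mul_left γ)).congr (fun k => ?_)
    ring
  -- value rewrites
  have hWz : w z = ∑' k : ℕ, c k * z ^ (2*k) := hC z
  have hG1 : (∑' n : ℕ, c n * (↑(2*n) * z ^ (2*n - 1)))
      = (∑' k : ℕ, (2*(k:ℝ)) * (c k * z ^ (2*k))) / z := by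
    rw [← tsum_div_const]
    exact tsum_congr (fun n => g_val c n hzne)
  have hH2 : (∑' n : ℕ, (c n * ↑(2*n)) * (↑(2*n - 1) * z ^ (2*n - 1 - 1)))
      = (∑' k : ℕ, ((2*(k:ℝ)) * ((2*(k:ℝ)) - 1)) * (c k * z ^ (2*k))) / z^2 := by
    rw [← tsum_div_const]
    exact tsum_congr (fun n => h_val c n hzne)
  rw [hder2.deriv, hder1.deriv, hWz, hG1, hH2]
  set A := ∑' k : ℕ, ((2*(k:ℝ)) * ((2*(k:ℝ)) - 1)) * (c k * z ^ (2*k)) with hA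
  set B := ∑' k : ℕ, (2*(k:ℝ)) * (c k * z ^ (2*k)) with hB
  set W := ∑' k : ℕ, c k * z ^ (2*k) with hW
  have key : z^2 * (A + ((1+α+β) * B + (α*β) * W)) = A + γ * B := by
    have e1 : A + ((1+α+β) * B + (α*β) * W)
        = ∑' k : ℕ, ((2*(k:ℝ)) + α) * ((2*(k:ℝ)) + β) * (c k * z ^ (2*k)) := by
      rw [hA, hB, hW, ← tsum_mul_left, ← tsum_mul_left,
        ← Summable.tsum_add (sT1.mul_left _) (sT.mul_left _),
        ← Summable.tsum_add sT2 ((sT1.mul_left _).add (sT.mul_left _))]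
      exact tsum_congr (fun k => by ring)
    have e2 : A + γ * B
        = ∑' k : ℕ, ((2*(k:ℝ)) * ((2*(k:ℝ)) - 1 + γ)) * (c k * z ^ (2*k)) := by
      rw [hA, hB, ← tsum_mul_left, ← Summable.tsum_add sT2 (sT1.mul_left _)]
      exact tsum_congr (fun k => by ring)
    rw [e1, e2, ← tsum_mul_left, Summable.tsum_eq_zero_add sTg]
    have h0 : (2*((0:ℕ):ℝ)) * ((2*((0:ℕ):ℝ)) - 1 + γ) * (c 0 * z ^ (2*0)) = 0 := by norm_num
    rw [h0, zero_add]
    refine tsum_congr (fun k => ?_)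
    have hz2 : z ^ (2*(k+1)) = z ^ (2*k) * z^2 := by
      rw [show 2*(k+1) = 2*k + 2 by ring, pow_add]
    push_cast
    rw [hz2]
    linear_combination (-(4:ℝ) * z ^ (2*k) * z^2) * hrec k
  have hε : ε = (1+α+β-γ)/2 := by linarith
  rw [hε]
  field_simp
  linear_combination 2 * key
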